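/- Let F : [0,1]^n → [0,1]^n be defined by F(φ)_i = f_{y,s}(z_i + Σ_{k≠i} y_{ik} φ_k), where y > 0, all y_{ik} ≥ 0, and Σ_{k≠i} y_{ik} ≤ y for each i. If moreover Σ_{k≠i} y_{ik} < y for each i (strict inequality), then F is a contraction on [0,1]^n with respect to the sup norm, and hence has a unique fixed point. -/

import Mathlib

noncomputable def f (y s h : ℝ) : ℝ := max 0 (min 1 ((h - s) / y))

lemma f_lip (y s : ℝ) (hy : 0 < y) (a b : ℝ) : |f y s a - f y s b| ≤ |a - b| / y := by
  unfold f
  have h1 : |max 0 (min 1 ((a - s) / y)) - max 0 (min 1 ((b - s) / y))|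
      ≤ |min 1 ((a - s) / y) - min 1 ((b - s) / y)| := by
    rw [max_comm 0, max_comm 0]
    exact abs_max_sub_max_le_abs _ _ _
  have h2 : |min 1 ((a - s) / y) - min 1 ((b - s) / y)| ≤ |(a - s) / y - (b - s) / y| := by
    refine (abs_min_sub_min_le_max _ _ _ _).trans ?_
    simp
  have h3 : |(a - s) / y - (b - s) / y| = |a - b| / y := by
    rw [div_sub_div_same, abs_div, abs_of_pos hy]
    ring_nf
  linarith [h1.trans h2]

lemma f_mem (y s h : ℝ) : f y s h ∈ Set.Icc (0:ℝ) 1 :=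
  ⟨le_max_left _ _, max_le zero_le_one (min_le_left _ _)⟩

theorem stmt_1 {n : ℕ} (y s : ℝ) (hy : 0 < y) (z : Fin n → ℝ) (Y : Fin n → Fin n → ℝ)
    (hYpos : ∀ i k, 0 ≤ Y i k)
    (hsub : ∀ i, ∑ k ∈ Finset.univ.erase i, Y i k < y) :
    ∃ K : ℝ, 0 ≤ K ∧ K < 1 ∧
      (∀ φ ψ : Fin n → ℝ, (∀ k, φ k ∈ Set.Icc (0:ℝ) 1) → (∀ k, ψ k ∈ Set.Icc (0:ℝ) 1) →
        ‖(fun i => f y s (z i + ∑ k ∈ Finset.univ.erase i, Y i k * φ k)) -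
          (fun i => f y s (z i + ∑ k ∈ Finset.univ.erase i, Y i k * ψ k))‖ ≤ K * ‖φ - ψ‖) ∧
      (∃! φ : Fin n → ℝ, (∀ k, φ k ∈ Set.Icc (0:ℝ) 1) ∧
        (∀ i, φ i = f y s (z i + ∑ k ∈ Finset.univ.erase i, Y i k * φ k))) := by
  rcases Nat.eq_zero_or_pos n with hn | hn
  · subst hn
    refine ⟨0, le_refl 0, zero_lt_one, ?_, ?_⟩
    · intro φ ψ _ _
      have : (fun i => f y s (z i + ∑ k ∈ Finset.univ.erase i, Y i k * φ k)) -
          (fun i => f y s (z i + ∑ k ∈ Finset.univ.erase i, Y i k * ψ k)) = 0 := by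
        funext i; exact i.elim0
      rw [this, norm_zero, zero_mul]
    · refine ⟨fun i => i.elim0, ⟨fun k => k.elim0, fun i => i.elim0⟩, ?_⟩
      intro ψ _
      funext i; exact i.elim0
  · -- positive case
    set S : Fin n → ℝ := fun i => ∑ k ∈ Finset.univ.erase i, Y i k with hS
    have hne : (Finset.univ : Finset (Fin n)).Nonempty := ⟨⟨0, hn⟩, Finset.mem_univ _⟩
    set M : ℝ := Finset.univ.sup' hne S with hM
    have hSnn : ∀ i, 0 ≤ S i := fun i => Finset.sum_nonneg fun k _ => hYpos i k
    have hMle : ∀ i, S i ≤ M := fun i => Finset.le_sup' S (Finset.mem_univ i)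
    have hM0 : 0 ≤ M := (hSnn hne.choose).trans (hMle hne.choose)
    have hMy : M < y := by
      obtain ⟨i, _, hi⟩ := Finset.exists_mem_eq_sup' hne S
      rw [hM, hi]; exact hsub i
    set K : ℝ := M / y with hK
    have hK0 : 0 ≤ K := div_nonneg hM0 hy.le
    have hK1 : K < 1 := (div_lt_one hy).mpr hMy
    -- key contraction estimate, global
    set F : (Fin n → ℝ) → (Fin n → ℝ) :=
      fun φ i => f y s (z i + ∑ k ∈ Finset.univ.erase i, Y i k * φ k) with hF
    have key : ∀ φ ψ : Fin n → ℝ, ‖F φ - F ψ‖ ≤ K * ‖φ - ψ‖ := by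
      intro φ ψ
      rw [pi_norm_le_iff_of_nonneg (by positivity)]
      intro i
      have h1 : ‖(F φ - F ψ) i‖ = |f y s (z i + ∑ k ∈ Finset.univ.erase i, Y i k * φ k) -
          f y s (z i + ∑ k ∈ Finset.univ.erase i, Y i k * ψ k)| := rfl
      rw [h1]
      refine (f_lip y s hy _ _).trans ?_
      have h2 : |(z i + ∑ k ∈ Finset.univ.erase i, Y i k * φ k) -
          (z i + ∑ k ∈ Finset.univ.erase i, Y i k * ψ k)|
          = |∑ k ∈ Finset.univ.erase i, Y i k * (φ k - ψ k)| := by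
        rw [add_sub_add_left_eq_sub, ← Finset.sum_sub_distrib]
        congr 1
        exact Finset.sum_congr rfl fun k _ => (mul_sub _ _ _).symm
      rw [h2]
      have h3 : |∑ k ∈ Finset.univ.erase i, Y i k * (φ k - ψ k)| ≤ S i * ‖φ - ψ‖ := by
        refine (Finset.abs_sum_le_sum_abs _ _).trans ?_
        rw [hS, Finset.sum_mul]
        refine Finset.sum_le_sum fun k _ => ?_
        rw [abs_mul, abs_of_nonneg (hYpos i k)]
        refine mul_le_mul_of_nonneg_left ?_ (hYpos i k)
        exact (norm_le_pi_norm (φ - ψ) k)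
      calc |∑ k ∈ Finset.univ.erase i, Y i k * (φ k - ψ k)| / y
          ≤ (S i * ‖φ - ψ‖) / y := (div_le_div_iff_of_pos_right hy).mpr h3
        _ ≤ (M * ‖φ - ψ‖) / y := (div_le_div_iff_of_pos_right hy).mpr
            (mul_le_mul_of_nonneg_right (hMle i) (norm_nonneg _))
        _ = K * ‖φ - ψ‖ := by rw [hK]; ring
    refine ⟨K, hK0, hK1, fun φ ψ _ _ => key φ ψ, ?_⟩
    -- Banach fixed point
    have hcontr : ContractingWith ⟨K, hK0⟩ F := by
      constructor
      · exact_mod_cast hK1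
      · apply LipschitzWith.of_dist_le_mul
        intro φ ψ
        simp only [dist_eq_norm]; exact key φ ψ
    let φ₀ := ContractingWith.fixedPoint F hcontr
    have hfix : Function.IsFixedPt F φ₀ := ContractingWith.fixedPoint_isFixedPt hcontr
    refine ⟨φ₀, ⟨?_, ?_⟩, ?_⟩
    · intro k
      have : φ₀ k = F φ₀ k := by rw [hfix]
      rw [this]; exact f_mem y s _
    · intro i
      conv_lhs => rw [← hfix]
    · rintro ψ ⟨-, hψ⟩
      have : Function.IsFixedPt F ψ := by funext i; exact (hψ i).symm
      exact hcontr.fixedPoint_unique this
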